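/- arXiv:2008.11253 — 4 statements merged into one kernel-verified Lean document; each statement's English description precedes it below -/
import Mathlib

section
/- For every integer n ≥ 2, the polynomial x^n + x + 1 over F_2 is squarefree (has no repeated irreducible factors). -/
open Polynomial

theorem trinomial_squarefree (n : ℕ) (hn : 2 ≤ n) :
    Squarefree ((X : (ZMod 2)[X]) ^ n + X + 1) := by
  have hsep : Separable ((X : (ZMod 2)[X]) ^ n + X + 1) := by
    rw [Polynomial.separable_def]
    have hder : derivative ((X : (ZMod 2)[X]) ^ n + X + 1)
        = C (n : ZMod 2) * X ^ (n - 1) + 1 := by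
      simp [derivative_X_pow]
    rw [hder]
    rcases Nat.even_or_odd n with he | ho
    · have h0 : ((n : ℕ) : ZMod 2) = 0 := by
        rw [ZMod.natCast_eq_zero_iff]
        exact he.two_dvd
      rw [h0]
      simpa using isCoprime_one_right (x := (X : (ZMod 2)[X]) ^ n + X + 1)
    · have h1 : ((n : ℕ) : ZMod 2) = 1 := by
        rw [← Nat.cast_one, ZMod.natCast_eq_natCast_iff]
        simpa [Nat.ModEq, Nat.odd_iff] using ho
      rw [h1]
      refine ⟨1, X, ?_⟩
      have hx : (X : (ZMod 2)[X]) * X ^ (n - 1) = X ^ n := by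
        rw [← pow_succ']
        congr 1
        omega
      have h2 : (2 : (ZMod 2)[X]) = 0 := by
        have h : ((2 : ℕ) : (ZMod 2)[X]) = C ((2 : ℕ) : ZMod 2) := by rw [C_eq_natCast]
        have h2' : ((2 : ℕ) : ZMod 2) = 0 := by decide
        rw [h2', map_zero] at h
        exact_mod_cast h
      rw [map_one, one_mul, mul_add, one_mul, hx, mul_one]
      linear_combination ((X : (ZMod 2)[X]) ^ n + X) * h2
  exact hsep.squarefree
end

section
/- Let n be a positive integer coprime to a prime power q, and let d be the multiplicative order of q modulo n. Then the n-th cyclotomic polynomial, viewed over F_q, factors into φ(n)/d distinct irreducible polynomials, each of degree d. -/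
open Polynomial

lemma char_eq_of_card (q r k : ℕ) (F : Type) [Field F] [Fintype F]
    (hF : Fintype.card F = q) (hr : r.Prime) (hk : 0 < k) (hqr : q = r ^ k) :
    CharP F r := by
  obtain ⟨p, hcp⟩ := CharP.exists F
  haveI := hcp
  haveI hp : Fact p.Prime := ⟨CharP.char_is_prime F p⟩
  obtain ⟨m, hm⟩ := FiniteField.card F p
  have : r = p := by
    have hdvd : r ∣ p ^ (m : ℕ) := by
      rw [← hm.2, hF, hqr]
      exact dvd_pow_self r hk.ne'
    exact (Nat.prime_dvd_prime_iff_eq hr hp.out).mp (hr.dvd_of_dvd_pow hdvd)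
  rwa [this]

lemma deg_irred_factor (q n : ℕ) (F : Type) [Field F] [Fintype F]
    (hF : Fintype.card F = q) (r k : ℕ) (hr : r.Prime) (hk : 0 < k) (hqr : q = r ^ k)
    (hn : 0 < n) (hcop : n.Coprime q)
    (g : F[X]) (hg : Irreducible g) (hdvd : g ∣ cyclotomic n F) :
    g.natDegree = orderOf (q : ZMod n) := by
  set d := orderOf (q : ZMod n) with hd
  haveI : Fact r.Prime := ⟨hr⟩
  haveI hcharF : CharP F r := char_eq_of_card q r k F hF hr hk hqr
  have hq2 : 2 ≤ q := by
    rw [hqr]; exact Nat.one_lt_pow hk.ne' hr.two_le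
  have hrn : ¬ r ∣ n := by
    intro h
    have : r ∣ Nat.gcd n q := Nat.dvd_gcd h (hqr ▸ dvd_pow_self r hk.ne')
    rw [hcop] at this
    exact hr.one_lt.ne' (Nat.eq_one_of_dvd_one this)
  haveI : NeZero (n : F) := NeZero.of_not_dvd F hrn
  haveI : Fact (Irreducible g) := ⟨hg⟩
  set K := AdjoinRoot g with hK
  haveI : CharP K r := charP_of_injective_algebraMap (algebraMap F K).injective r
  haveI : NeZero (n : K) := NeZero.of_not_dvd K hrn
  set m := g.natDegree with hm
  have hg0 : g ≠ 0 := hg.ne_zero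
  have hm0 : 0 < m := hg.natDegree_pos
  set pb := AdjoinRoot.powerBasis hg0 with hpb
  haveI : Module.Finite F K := Module.Finite.of_basis pb.basis
  haveI : Finite K := Module.finite_of_finite F
  haveI : Fintype K := Fintype.ofFinite K
  have hcardK : Fintype.card K = q ^ m := by
    rw [Module.card_fintype pb.basis, hF]
    congr 1
    · exact Fintype.card_fin _
  set μ := AdjoinRoot.root g with hμ
  have hroot : IsRoot (cyclotomic n K) μ := by
    obtain ⟨c, hc⟩ := hdvd
    have : (aeval μ) (cyclotomic n F) = 0 := by
      rw [hc, map_mul, AdjoinRoot.aeval_eq, AdjoinRoot.mk_self, zero_mul]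
    rwa [IsRoot.def, ← map_cyclotomic n (algebraMap F K), eval_map, ← aeval_def]
  have hprim : IsPrimitiveRoot μ n := (isRoot_cyclotomic_iff).mp hroot
  have hμ0 : μ ≠ 0 := by
    intro h
    have := hprim.pow_eq_one
    rw [h, zero_pow hn.ne'] at this
    exact zero_ne_one this
  -- d ∣ m
  have hdm : d ∣ m := by
    have h1 : μ ^ (q ^ m - 1) = 1 := by
      rw [← hcardK]; exact FiniteField.pow_card_sub_one_eq_one μ hμ0
    have hnd : n ∣ q ^ m - 1 := hprim.pow_eq_one_iff_dvd _ |>.mp h1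
    have : ((q : ZMod n)) ^ m = 1 := by
      have h2 : ((q ^ m - 1 : ℕ) : ZMod n) = 0 := (ZMod.natCast_eq_zero_iff _ _).mpr hnd
      have hq1 : 1 ≤ q ^ m := Nat.one_le_pow _ _ (by omega)
      rw [Nat.cast_sub hq1, Nat.cast_pow, Nat.cast_one, sub_eq_zero] at h2
      exact h2
    exact orderOf_dvd_of_pow_eq_one this
  -- m ≤ d
  have hd0 : 0 < d := by
    rcases Nat.eq_zero_or_pos d with h | h
    · rw [h] at hdm; rw [Nat.zero_dvd.mp hdm] at hm0; exact absurd hm0 (lt_irrefl 0)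
    · exact h
  have hqd1 : n ∣ q ^ d - 1 := by
    have : ((q : ZMod n)) ^ d = 1 := pow_orderOf_eq_one _
    have h2 : ((q ^ d : ℕ) : ZMod n) = ((1 : ℕ) : ZMod n) := by push_cast; simpa using this
    have := (ZMod.natCast_eq_natCast_iff _ _ _).mp h2
    exact (Nat.modEq_iff_dvd' (Nat.one_le_pow _ _ (by omega))).mp this.symm
  have hfrob : ∀ x : K, x ^ q ^ d = x := by
    have hqd : q ^ d = r ^ (k * d) := by rw [hqr, pow_mul]
    set φ₀ : K →+* K := iterateFrobenius K r (k * d) with hφ₀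
    have hφ₀app : ∀ x : K, φ₀ x = x ^ q ^ d := by
      intro x; rw [hφ₀, iterateFrobenius_def, ← hqd]
    set φ : K →ₐ[F] K :=
      { toRingHom := φ₀
        commutes' := by
          intro a
          rw [RingHom.toMonoidHom_eq_coe, OneHom.toFun_eq_coe, MonoidHom.toOneHom_coe,
            MonoidHom.coe_coe, hφ₀app, ← map_pow]
          congr 1
          calc a ^ q ^ d = a ^ Fintype.card F ^ d := by rw [hF]
            _ = a := FiniteField.pow_card_pow d a } with hφ
    have hφμ : φ μ = μ := by
      show φ₀ μ = μ
      rw [hφ₀app]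
      obtain ⟨t, ht⟩ := hqd1
      have : q ^ d = n * t + 1 := by
        have : 1 ≤ q ^ d := Nat.one_le_pow _ _ (by omega)
        omega
      rw [this, pow_add, pow_mul, hprim.pow_eq_one, one_pow, one_mul, pow_one]
    intro x
    induction x using AdjoinRoot.induction_on with
    | ih p =>
      have : φ (AdjoinRoot.mk g p) = AdjoinRoot.mk g p := by
        rw [← AdjoinRoot.aeval_eq, ← aeval_algHom_apply, hφμ]
      rw [← hφ₀app]
      exact this
  -- count roots of X^(q^d) - X
  have hmd : m ≤ d := by
    have hqd1' : 1 < q ^ d := Nat.one_lt_pow hd0.ne' (by omega)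
    set P : K[X] := X ^ q ^ d - X with hP
    have hP0 : P ≠ 0 := FiniteField.X_pow_card_sub_X_ne_zero K hqd1'
    have hPdeg : P.natDegree = q ^ d := FiniteField.X_pow_card_sub_X_natDegree_eq K hqd1'
    have huniv : P.roots.toFinset = Finset.univ := by
      rw [Finset.eq_univ_iff_forall]
      intro x
      rw [Multiset.mem_toFinset, mem_roots hP0, IsRoot.def, hP, eval_sub, eval_pow, eval_X,
        sub_eq_zero, hfrob]
    have h1 : Fintype.card K ≤ q ^ d := by
      calc Fintype.card K = P.roots.toFinset.card := by rw [huniv, Finset.card_univ]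
        _ ≤ Multiset.card P.roots := Multiset.toFinset_card_le _
        _ ≤ P.natDegree := P.card_roots'
        _ = q ^ d := hPdeg
    rw [hcardK] at h1
    exact (Nat.pow_le_pow_iff_right (by omega)).mp h1
  exact le_antisymm hmd (Nat.le_of_dvd hm0 hdm)

theorem cyclotomic_factorization (q n : ℕ) (F : Type) [Field F] [Fintype F]
    (hF : Fintype.card F = q)
    (hq : ∃ r k : ℕ, r.Prime ∧ 0 < k ∧ q = r ^ k)
    (hn : 0 < n) (hcop : n.Coprime q) (d : ℕ) (hd : d = orderOf (q : ZMod n)) :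
    ∃ s : Finset (Polynomial F),
      s.card = n.totient / d ∧
      (∀ g ∈ s, Irreducible g ∧ g.natDegree = d) ∧
      Polynomial.cyclotomic n F = ∏ g ∈ s, g := by
  classical
  obtain ⟨r, k, hr, hk, hqr⟩ := hq
  haveI : Fact r.Prime := ⟨hr⟩
  haveI : NeZero n := ⟨hn.ne'⟩
  haveI hcharF : CharP F r := char_eq_of_card q r k F hF hr hk hqr
  have hrn : ¬ r ∣ n := by
    intro h
    have : r ∣ Nat.gcd n q := Nat.dvd_gcd h (hqr ▸ dvd_pow_self r hk.ne')
    rw [hcop] at this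
    exact hr.one_lt.ne' (Nat.eq_one_of_dvd_one this)
  have hnF : (n : F) ≠ 0 := (NeZero.of_not_dvd F hrn).out
  have hΦ0 : cyclotomic n F ≠ 0 := cyclotomic_ne_zero n F
  have hmonic : (cyclotomic n F).Monic := cyclotomic.monic n F
  have hsep : (cyclotomic n F).Separable :=
    Polynomial.Separable.of_dvd (X_pow_sub_one_separable_iff.mpr hnF)
      (cyclotomic.dvd_X_pow_sub_one n F)
  have hsf : Squarefree (cyclotomic n F) := hsep.squarefree
  set M := UniqueFactorizationMonoid.normalizedFactors (cyclotomic n F) with hM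
  have hnodup : M.Nodup :=
    (UniqueFactorizationMonoid.squarefree_iff_nodup_normalizedFactors hΦ0).mp hsf
  set s := M.toFinset with hs
  have hsval : s.val = M := by
    rw [hs, Multiset.toFinset_val, Multiset.dedup_eq_self.mpr hnodup]
  have hmemM : ∀ g ∈ s, Monic g := by
    intro g hg
    rw [hs, Multiset.mem_toFinset] at hg
    have h0 : g ≠ 0 := (UniqueFactorizationMonoid.irreducible_of_normalized_factor g hg).ne_zero
    have := UniqueFactorizationMonoid.normalize_normalized_factor g hg
    rw [← this]
    exact Polynomial.monic_normalize h0
  have hassoc : Associated (∏ g ∈ s, g) (cyclotomic n F) := by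
    rw [Finset.prod_eq_multiset_prod, Multiset.map_id', hsval]
    exact UniqueFactorizationMonoid.prod_normalizedFactors hΦ0
  have hsmonic : (∏ g ∈ s, g).Monic := Polynomial.monic_prod_of_monic _ _ hmemM
  have hprods : ∏ g ∈ s, g = cyclotomic n F :=
    Polynomial.eq_of_monic_of_associated hsmonic hmonic hassoc
  have hdeg : ∀ g ∈ s, Irreducible g ∧ g.natDegree = d := by
    intro g hg
    rw [hs, Multiset.mem_toFinset] at hg
    have hirr := UniqueFactorizationMonoid.irreducible_of_normalized_factor g hg
    refine ⟨hirr, ?_⟩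
    rw [hd]
    exact deg_irred_factor q n F hF r k hr hk hqr hn hcop g hirr
      (UniqueFactorizationMonoid.dvd_of_mem_normalizedFactors hg)
  have hd0 : 0 < d := by
    rw [hd, ← ZMod.coe_unitOfCoprime q hcop.symm, orderOf_units]
    exact orderOf_pos _
  have hcard : n.totient = s.card * d := by
    have h1 : (cyclotomic n F).natDegree = n.totient := natDegree_cyclotomic n F
    have h2 : (∏ g ∈ s, g).natDegree = ∑ g ∈ s, g.natDegree :=
      Polynomial.natDegree_prod _ _ (fun g hg => (hdeg g hg).1.ne_zero)
    have h3 : ∑ g ∈ s, g.natDegree = s.card * d := by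
      rw [Finset.sum_congr rfl (fun g hg => (hdeg g hg).2), Finset.sum_const, smul_eq_mul]
    rw [← h1, ← hprods, h2, h3]
  exact ⟨s, by rw [hcard, Nat.mul_div_cancel _ hd0], hdeg, hprods.symm⟩
end

section
/- Let A be an invertible F_2-linear map on (F_2)^d and let Q be the measure with Q(0)=1/2, Q(e_i)=1/(2d). Let Q_n be the distribution after n steps of the chain X_n = AX_{n−1}+ε_n (X_0=0, ε_n i.i.d. ∼ Q), and P_n the distribution after n steps of X_n = X_{n−1}+ε_n. Then 2^d Σ_α (Q_n(α)−U(α))^2 ≤ 2^d Σ_α (P_n(α)−U(α))^2, where U is uniform. -/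
open Finset Matrix

/-- The step distribution: `0` with probability `1/2`, each standard basis
vector with probability `1/(2d)`. -/
noncomputable def stepQ (d : ℕ) (α : Fin d → ZMod 2) : ℝ :=
  if α = 0 then 1 / 2 else if ∃ i, α = Pi.single i 1 then 1 / (2 * d) else 0

/-- Distribution after `n` steps of the chain `X₀ = 0`, `Xₙ = A Xₙ₋₁ + εₙ`,
with the `εₙ` i.i.d. with distribution `Q`. -/
noncomputable def chainDist (d : ℕ) (A : Matrix (Fin d) (Fin d) (ZMod 2))
    (Q : (Fin d → ZMod 2) → ℝ) : ℕ → (Fin d → ZMod 2) → ℝ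
  | 0 => fun α => if α = 0 then 1 else 0
  | n + 1 => fun α => ∑ γ : Fin d → ZMod 2, chainDist d A Q n γ * Q (α + A.mulVec γ)

/-! ### Auxiliary Fourier analysis on `(ZMod 2)^d` -/

/-- The real sign of an element of `ZMod 2`. -/
noncomputable def sgn (x : ZMod 2) : ℝ := if x = 0 then 1 else -1

lemma zmod2_cases (x : ZMod 2) : x = 0 ∨ x = 1 := by revert x; decide

lemma sgn_zero' : sgn 0 = 1 := by simp [sgn]

lemma sgn_one' : sgn 1 = -1 := by simp [sgn]

lemma sgn_add (x y : ZMod 2) : sgn (x + y) = sgn x * sgn y := by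
  have h11 : (1 : ZMod 2) + 1 = 0 := by decide
  rcases zmod2_cases x with hx | hx <;> rcases zmod2_cases y with hy | hy <;>
    subst hx <;> subst hy <;> simp [sgn, h11]

lemma sgn_le_one (x : ZMod 2) : sgn x ≤ 1 := by
  rcases zmod2_cases x with h | h <;> subst h <;> norm_num [sgn]

lemma neg_one_le_sgn (x : ZMod 2) : -1 ≤ sgn x := by
  rcases zmod2_cases x with h | h <;> subst h <;> norm_num [sgn]

lemma vadd_self {d : ℕ} (v : Fin d → ZMod 2) : v + v = 0 := by
  funext i
  have : ∀ x : ZMod 2, x + x = 0 := by decide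
  exact this (v i)

lemma card_G (d : ℕ) : Fintype.card (Fin d → ZMod 2) = 2 ^ d := by
  simp [Fintype.card_fun]

/-- Orthogonality of characters. -/
lemma sum_sgn_dot {d : ℕ} (β : Fin d → ZMod 2) :
    ∑ α : Fin d → ZMod 2, sgn (β ⬝ᵥ α) = if β = 0 then (2 : ℝ) ^ d else 0 := by
  split_ifs with h
  · subst h
    simp only [zero_dotProduct, sgn_zero']
    rw [Finset.sum_const, Finset.card_univ, card_G, nsmul_eq_mul]
    push_cast; ring
  · obtain ⟨i, hi⟩ : ∃ i, β i ≠ 0 := Function.ne_iff.mp h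
    have hbi : β i = 1 := by
      rcases zmod2_cases (β i) with h' | h' <;> simp_all
    have hdot : β ⬝ᵥ (Pi.single i 1 : Fin d → ZMod 2) = 1 := by
      rw [dotProduct_single, hbi, mul_one]
    have h1 : ∑ α : Fin d → ZMod 2, sgn (β ⬝ᵥ (α + Pi.single i 1)) =
        ∑ α : Fin d → ZMod 2, sgn (β ⬝ᵥ α) :=
      Fintype.sum_equiv (Equiv.addRight (Pi.single i 1 : Fin d → ZMod 2)) _ _ (fun α => rfl)
    have h2 : ∀ α : Fin d → ZMod 2, sgn (β ⬝ᵥ (α + Pi.single i 1)) = -sgn (β ⬝ᵥ α) := by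
      intro α
      rw [dotProduct_add, sgn_add, hdot, sgn_one']
      ring
    simp only [h2] at h1
    rw [Finset.sum_neg_distrib] at h1
    linarith

/-- The Fourier transform of `P : (ZMod 2)^d → ℝ`. -/
noncomputable def ft (d : ℕ) (P : (Fin d → ZMod 2) → ℝ) (β : Fin d → ZMod 2) : ℝ :=
  ∑ α : Fin d → ZMod 2, P α * sgn (β ⬝ᵥ α)

lemma ft_stepQ {d : ℕ} (β : Fin d → ZMod 2) :
    ft d (stepQ d) β = 1 / 2 + (1 / (2 * d)) * ∑ i, sgn (β i) := by
  have hsplit : ∀ α : Fin d → ZMod 2, stepQ d α =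
      (if α = 0 then (1 : ℝ) / 2 else 0) +
        (1 / (2 * d)) * ∑ i, (if α = Pi.single i 1 then (1 : ℝ) else 0) := by
    intro α
    by_cases h0 : α = 0
    · subst h0
      have hns : ∀ i : Fin d, ¬((0 : Fin d → ZMod 2) = Pi.single i 1) := by
        intro i h
        have := congrFun h i
        simp at this
      have hstep : stepQ d 0 = 1 / 2 := by unfold stepQ; rw [if_pos rfl]
      rw [hstep, if_pos rfl, Finset.sum_congr rfl (fun i _ => if_neg (hns i))]
      simp
    · by_cases hex : ∃ i, α = Pi.single i 1
      · obtain ⟨i0, hi0⟩ := hex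
        have hsum : ∑ i, (if α = Pi.single i 1 then (1 : ℝ) else 0) = 1 := by
          rw [Finset.sum_eq_single i0]
          · simp [hi0]
          · intro j _ hj
            rw [if_neg]
            intro hcontra
            have he : (Pi.single i0 1 : Fin d → ZMod 2) = Pi.single j 1 := hi0 ▸ hcontra
            have hval := congrFun he i0
            rw [Pi.single_eq_same, Pi.single_eq_of_ne (Ne.symm hj)] at hval
            exact one_ne_zero hval
          · intro habs
            exact absurd (Finset.mem_univ i0) habs
        rw [hsum]
        have hstep : stepQ d α = 1 / (2 * d) := by
          unfold stepQ; rw [if_neg h0, if_pos ⟨i0, hi0⟩]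
        rw [hstep, if_neg h0]
        ring
      · have hsum : ∑ i, (if α = Pi.single i 1 then (1 : ℝ) else 0) = 0 := by
          apply Finset.sum_eq_zero
          intro i _
          rw [if_neg (fun hcontra => hex ⟨i, hcontra⟩)]
        rw [hsum]
        have hstep : stepQ d α = 0 := by
          unfold stepQ; rw [if_neg h0, if_neg hex]
        rw [hstep, if_neg h0]
        ring
  unfold ft
  rw [Finset.sum_congr rfl (fun α _ => by rw [hsplit α])]
  have e1 : ∑ α : Fin d → ZMod 2,
      ((if α = 0 then (1 : ℝ) / 2 else 0) +
        (1 / (2 * d)) * ∑ i, (if α = Pi.single i 1 then (1 : ℝ) else 0)) * sgn (β ⬝ᵥ α)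
      = (∑ α : Fin d → ZMod 2, (if α = 0 then (1 : ℝ) / 2 else 0) * sgn (β ⬝ᵥ α)) +
        (1 / (2 * d)) * ∑ α : Fin d → ZMod 2,
          (∑ i, (if α = Pi.single i 1 then (1 : ℝ) else 0)) * sgn (β ⬝ᵥ α) := by
    conv_rhs => rw [Finset.mul_sum]
    rw [← Finset.sum_add_distrib]
    apply Finset.sum_congr rfl
    intro α _
    ring
  rw [e1]
  congr 1
  · rw [Finset.sum_eq_single 0]
    · simp [sgn_zero']
    · intro α _ hα; simp [hα]
    · intro habs; exact absurd (Finset.mem_univ 0) habs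
  · congr 1
    rw [Finset.sum_congr rfl (fun α _ => Finset.sum_mul _ _ _), Finset.sum_comm]
    apply Finset.sum_congr rfl
    intro i _
    rw [Finset.sum_eq_single (Pi.single i 1 : Fin d → ZMod 2)]
    · rw [if_pos rfl, one_mul, dotProduct_single, mul_one]
    · intro α _ hα; simp [hα]
    · intro habs; exact absurd (Finset.mem_univ _) habs

lemma ft_stepQ_nonneg {d : ℕ} (hd : 0 < d) (β : Fin d → ZMod 2) :
    0 ≤ ft d (stepQ d) β := by
  rw [ft_stepQ]
  have hdR : (0 : ℝ) < d := by exact_mod_cast hd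
  have hs : -(d : ℝ) ≤ ∑ i, sgn (β i) := by
    calc -(d : ℝ) = ∑ _i : Fin d, (-1 : ℝ) := by simp
    _ ≤ ∑ i, sgn (β i) := Finset.sum_le_sum fun i _ => neg_one_le_sgn (β i)
  have h1 : (1 / (2 * (d : ℝ))) * (-(d : ℝ)) ≤ (1 / (2 * d)) * ∑ i, sgn (β i) :=
    mul_le_mul_of_nonneg_left hs (by positivity)
  have h2 : (1 / (2 * (d : ℝ))) * (-(d : ℝ)) = -(1 / 2) := by
    field_simp
  linarith

lemma ft_stepQ_le_one {d : ℕ} (hd : 0 < d) (β : Fin d → ZMod 2) :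
    ft d (stepQ d) β ≤ 1 := by
  rw [ft_stepQ]
  have hdR : (0 : ℝ) < d := by exact_mod_cast hd
  have hs : ∑ i, sgn (β i) ≤ (d : ℝ) := by
    calc ∑ i, sgn (β i) ≤ ∑ _i : Fin d, (1 : ℝ) :=
          Finset.sum_le_sum fun i _ => sgn_le_one (β i)
    _ = (d : ℝ) := by simp
  have h1 : (1 / (2 * (d : ℝ))) * ∑ i, sgn (β i) ≤ (1 / (2 * d)) * (d : ℝ) :=
    mul_le_mul_of_nonneg_left hs (by positivity)
  have h2 : (1 / (2 * (d : ℝ))) * (d : ℝ) = 1 / 2 := by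
    field_simp
  linarith

lemma ft_stepQ_zero {d : ℕ} (hd : 0 < d) : ft d (stepQ d) 0 = 1 := by
  rw [ft_stepQ]
  have hdR : (0 : ℝ) < d := by exact_mod_cast hd
  simp only [Pi.zero_apply, sgn_zero', Finset.sum_const, Finset.card_univ, Fintype.card_fin,
    nsmul_eq_mul, mul_one]
  field_simp
  ring

/-- Fourier transform of the chain distribution. -/
lemma ft_chain (d : ℕ) (A : Matrix (Fin d) (Fin d) (ZMod 2)) (Q : (Fin d → ZMod 2) → ℝ)
    (n : ℕ) (β : Fin d → ZMod 2) :
    ft d (chainDist d A Q n) β = ∏ j ∈ Finset.range n, ft d Q ((Aᵀ ^ j) *ᵥ β) := by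
  induction n generalizing β with
  | zero =>
    simp only [Finset.range_zero, Finset.prod_empty, chainDist, ft]
    rw [Finset.sum_eq_single 0]
    · simp [sgn_zero']
    · intro α _ hα; simp [hα]
    · intro habs; exact absurd (Finset.mem_univ _) habs
  | succ n ih =>
    have step : ft d (chainDist d A Q (n + 1)) β =
        ft d Q β * ft d (chainDist d A Q n) (Aᵀ *ᵥ β) := by
      unfold ft
      show (∑ α : Fin d → ZMod 2,
          (∑ γ : Fin d → ZMod 2, chainDist d A Q n γ * Q (α + A.mulVec γ)) * sgn (β ⬝ᵥ α)) = _
      rw [Finset.sum_congr rfl (fun α _ => Finset.sum_mul _ _ _), Finset.sum_comm]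
      have inner : ∀ γ : Fin d → ZMod 2,
          ∑ α : Fin d → ZMod 2, chainDist d A Q n γ * Q (α + A.mulVec γ) * sgn (β ⬝ᵥ α)
            = chainDist d A Q n γ * sgn ((Aᵀ *ᵥ β) ⬝ᵥ γ) * ∑ δ : Fin d → ZMod 2,
                Q δ * sgn (β ⬝ᵥ δ) := by
        intro γ
        set c := A.mulVec γ with hc
        have reindex : ∑ α : Fin d → ZMod 2, chainDist d A Q n γ * Q (α + c) * sgn (β ⬝ᵥ α)
            = ∑ δ : Fin d → ZMod 2, chainDist d A Q n γ * Q δ * sgn (β ⬝ᵥ (δ + c)) := by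
          apply Fintype.sum_equiv (Equiv.addRight c)
          intro α
          simp only [Equiv.coe_addRight]
          rw [add_assoc, vadd_self, add_zero]
        rw [reindex]
        have hAc : sgn (β ⬝ᵥ c) = sgn ((Aᵀ *ᵥ β) ⬝ᵥ γ) := by
          rw [hc, dotProduct_mulVec, mulVec_transpose]
        rw [Finset.mul_sum]
        apply Finset.sum_congr rfl
        intro δ _
        rw [dotProduct_add, sgn_add, hAc]
        ring
      rw [Finset.sum_congr rfl (fun γ _ => inner γ)]
      rw [← Finset.sum_mul]
      rw [mul_comm]
    rw [step, ih]
    rw [Finset.prod_range_succ']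
    have hpow : ∀ j : ℕ, (Aᵀ ^ j) *ᵥ (Aᵀ *ᵥ β) = (Aᵀ ^ (j + 1)) *ᵥ β := by
      intro j
      rw [mulVec_mulVec, ← pow_succ]
    simp only [hpow, pow_zero, one_mulVec]
    ring

/-- Parseval's identity. -/
lemma parseval {d : ℕ} (P : (Fin d → ZMod 2) → ℝ) :
    ∑ β : Fin d → ZMod 2, (ft d P β) ^ 2 = 2 ^ d * ∑ α : Fin d → ZMod 2, (P α) ^ 2 := by
  have expand : ∀ β : Fin d → ZMod 2, (ft d P β) ^ 2 =
      ∑ α : Fin d → ZMod 2, ∑ α' : Fin d → ZMod 2,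
        P α * P α' * sgn (β ⬝ᵥ (α + α')) := by
    intro β
    rw [sq, ft, Finset.sum_mul_sum]
    apply Finset.sum_congr rfl
    intro α _
    apply Finset.sum_congr rfl
    intro α' _
    rw [dotProduct_add, sgn_add]
    ring
  rw [Finset.sum_congr rfl (fun β _ => expand β), Finset.sum_comm]
  have inner : ∀ α : Fin d → ZMod 2,
      (∑ β : Fin d → ZMod 2, ∑ α' : Fin d → ZMod 2, P α * P α' * sgn (β ⬝ᵥ (α + α')))
        = 2 ^ d * (P α) ^ 2 := by
    intro α
    rw [Finset.sum_comm]
    have h1 : ∀ α' : Fin d → ZMod 2,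
        ∑ β : Fin d → ZMod 2, P α * P α' * sgn (β ⬝ᵥ (α + α'))
          = P α * P α' * (if α + α' = 0 then (2 : ℝ) ^ d else 0) := by
      intro α'
      rw [← Finset.mul_sum]
      congr 1
      rw [← sum_sgn_dot (α + α')]
      apply Finset.sum_congr rfl
      intro β _
      rw [dotProduct_comm]
    rw [Finset.sum_congr rfl (fun α' _ => h1 α')]
    have hcond : ∀ α' : Fin d → ZMod 2, (α + α' = 0) ↔ (α' = α) := by
      intro α'
      constructor
      · intro h
        funext i
        have hi := congrFun h i
        have : ∀ x y : ZMod 2, x + y = 0 → y = x := by decide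
        exact this (α i) (α' i) hi
      · rintro rfl; exact vadd_self _
    rw [Finset.sum_eq_single α]
    · rw [if_pos ((hcond α).mpr rfl)]; ring
    · intro α' _ hα'
      rw [if_neg (fun h => hα' ((hcond α').mp h)), mul_zero]
    · intro habs; exact absurd (Finset.mem_univ _) habs
  rw [Finset.sum_congr rfl (fun α _ => inner α), ← Finset.mul_sum]

/-- The squared L² distance to uniform, in Fourier form. -/
lemma dist_eq {d : ℕ} (hd : 0 < d) (A : Matrix (Fin d) (Fin d) (ZMod 2)) (n : ℕ) :
    ∑ α : Fin d → ZMod 2, (chainDist d A (stepQ d) n α - 1 / 2 ^ d) ^ 2 =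
      (1 / 2 ^ d) * ∑ β ∈ Finset.univ.erase (0 : Fin d → ZMod 2),
        (∏ j ∈ Finset.range n, ft d (stepQ d) ((Aᵀ ^ j) *ᵥ β)) ^ 2 := by
  set P := chainDist d A (stepQ d) n with hP
  have hft0 : ft d P 0 = 1 := by
    rw [hP, ft_chain]
    rw [Finset.prod_congr rfl (fun j _ => by rw [mulVec_zero, ft_stepQ_zero hd])]
    simp
  have hmass : ∑ α : Fin d → ZMod 2, P α = 1 := by
    rw [← hft0]
    unfold ft
    apply Finset.sum_congr rfl
    intro α _
    rw [zero_dotProduct, sgn_zero', mul_one]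
  have hcard : ((Finset.univ : Finset (Fin d → ZMod 2)).card : ℝ) = 2 ^ d := by
    rw [Finset.card_univ, card_G]; push_cast; ring
  have hexpand : ∑ α : Fin d → ZMod 2, (P α - 1 / 2 ^ d) ^ 2 =
      (∑ α : Fin d → ZMod 2, (P α) ^ 2) - 2 * (1 / 2 ^ d) * (∑ α : Fin d → ZMod 2, P α)
        + ((Finset.univ : Finset (Fin d → ZMod 2)).card : ℝ) * (1 / 2 ^ d) ^ 2 := by
    have hterm : ∀ α ∈ (Finset.univ : Finset (Fin d → ZMod 2)),
        (P α - 1 / 2 ^ d) ^ 2 =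
          (P α) ^ 2 - 2 * (1 / 2 ^ d) * P α + (1 / 2 ^ d) ^ 2 := fun α _ => by ring
    rw [Finset.sum_congr rfl hterm]
    rw [Finset.sum_add_distrib, Finset.sum_sub_distrib, ← Finset.mul_sum, Finset.sum_const,
      nsmul_eq_mul]
  have hpars : ∑ α : Fin d → ZMod 2, (P α) ^ 2 =
      (1 / 2 ^ d) * ∑ β : Fin d → ZMod 2, (ft d P β) ^ 2 := by
    rw [parseval]
    field_simp
  have hsplit : ∑ β : Fin d → ZMod 2, (ft d P β) ^ 2 =
      (ft d P 0) ^ 2 + ∑ β ∈ Finset.univ.erase (0 : Fin d → ZMod 2), (ft d P β) ^ 2 :=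
    (Finset.add_sum_erase _ _ (Finset.mem_univ 0)).symm
  have hprod : ∀ β, (ft d P β) ^ 2 =
      (∏ j ∈ Finset.range n, ft d (stepQ d) ((Aᵀ ^ j) *ᵥ β)) ^ 2 := by
    intro β; rw [hP, ft_chain]
  rw [hexpand, hmass, hcard, hpars, hsplit, hft0]
  rw [Finset.sum_congr rfl (fun β _ => hprod β)]
  have h2d : (0 : ℝ) < 2 ^ d := by positivity
  field_simp
  ring

/-- AM–GM in the form needed here. -/
lemma amgm {n : ℕ} (hn : 0 < n) (x : ℕ → ℝ) (hx : ∀ j, 0 ≤ x j) :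
    ∏ j ∈ Finset.range n, x j ≤ (1 / n) * ∑ j ∈ Finset.range n, (x j) ^ n := by
  have hnR : (0 : ℝ) < n := by exact_mod_cast hn
  have h := Real.geom_mean_le_arith_mean_weighted (Finset.range n)
      (fun _ => (n : ℝ)⁻¹) (fun j => x j ^ n)
      (fun i _ => by positivity)
      (by rw [Finset.sum_const, Finset.card_range, nsmul_eq_mul, mul_inv_cancel₀ (ne_of_gt hnR)])
      (fun i _ => pow_nonneg (hx i) n)
  have hlhs : ∀ j, (x j ^ n : ℝ) ^ ((n : ℝ)⁻¹) = x j := by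
    intro j
    rw [← Real.rpow_natCast (x j) n, ← Real.rpow_mul (hx j), mul_inv_cancel₀ (ne_of_gt hnR),
      Real.rpow_one]
  rw [Finset.prod_congr rfl (fun j _ => hlhs j)] at h
  calc ∏ j ∈ Finset.range n, x j ≤ ∑ j ∈ Finset.range n, (n : ℝ)⁻¹ * x j ^ n := h
    _ = (1 / n) * ∑ j ∈ Finset.range n, (x j) ^ n := by
        rw [Finset.mul_sum]; apply Finset.sum_congr rfl; intro j _; rw [one_div]

/-- Summing over nonzero vectors is invariant under an invertible matrix. -/
lemma rearrange {d : ℕ} (M : Matrix (Fin d) (Fin d) (ZMod 2)) (hM : IsUnit M)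
    (f : (Fin d → ZMod 2) → ℝ) :
    ∑ β ∈ Finset.univ.erase (0 : Fin d → ZMod 2), f (M *ᵥ β) =
      ∑ β ∈ Finset.univ.erase (0 : Fin d → ZMod 2), f β := by
  have hbij : Function.Bijective (M.mulVec) :=
    ⟨Matrix.mulVec_injective_iff_isUnit.mpr hM, Matrix.mulVec_surjective_iff_isUnit.mpr hM⟩
  have htot : ∑ β : Fin d → ZMod 2, f (M *ᵥ β) = ∑ β : Fin d → ZMod 2, f β :=
    Fintype.sum_bijective _ hbij _ _ (fun β => rfl)
  have h1 : f (M *ᵥ (0 : Fin d → ZMod 2)) + ∑ β ∈ Finset.univ.erase (0 : Fin d → ZMod 2),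
      f (M *ᵥ β) = ∑ β : Fin d → ZMod 2, f (M *ᵥ β) :=
    Finset.add_sum_erase _ (fun β => f (M *ᵥ β)) (Finset.mem_univ 0)
  have h2 : f 0 + ∑ β ∈ Finset.univ.erase (0 : Fin d → ZMod 2), f β =
      ∑ β : Fin d → ZMod 2, f β :=
    Finset.add_sum_erase _ f (Finset.mem_univ 0)
  rw [mulVec_zero] at h1
  linarith

/-- Key inequality: the chain with `A` has smaller Fourier mass than the plain walk. -/
lemma key_ineq {d n : ℕ} (hn : 0 < n) (M : Matrix (Fin d) (Fin d) (ZMod 2)) (hM : IsUnit M)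
    (h : (Fin d → ZMod 2) → ℝ) (h0 : ∀ β, 0 ≤ h β) :
    ∑ β ∈ Finset.univ.erase (0 : Fin d → ZMod 2), ∏ j ∈ Finset.range n, h ((M ^ j) *ᵥ β) ≤
      ∑ β ∈ Finset.univ.erase (0 : Fin d → ZMod 2), (h β) ^ n := by
  have hnR : (0 : ℝ) < n := by exact_mod_cast hn
  have step1 : ∑ β ∈ Finset.univ.erase (0 : Fin d → ZMod 2),
      ∏ j ∈ Finset.range n, h ((M ^ j) *ᵥ β) ≤
      ∑ β ∈ Finset.univ.erase (0 : Fin d → ZMod 2),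
        (1 / n) * ∑ j ∈ Finset.range n, (h ((M ^ j) *ᵥ β)) ^ n := by
    apply Finset.sum_le_sum
    intro β _
    exact amgm hn (fun j => h ((M ^ j) *ᵥ β)) (fun j => h0 _)
  have step2 : ∑ β ∈ Finset.univ.erase (0 : Fin d → ZMod 2),
      (1 / (n : ℝ)) * ∑ j ∈ Finset.range n, (h ((M ^ j) *ᵥ β)) ^ n =
      (1 / n) * ∑ j ∈ Finset.range n, ∑ β ∈ Finset.univ.erase (0 : Fin d → ZMod 2),
        (h ((M ^ j) *ᵥ β)) ^ n := by
    rw [← Finset.mul_sum, Finset.sum_comm]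
  have step3 : ∀ j : ℕ, ∑ β ∈ Finset.univ.erase (0 : Fin d → ZMod 2),
      (h ((M ^ j) *ᵥ β)) ^ n = ∑ β ∈ Finset.univ.erase (0 : Fin d → ZMod 2), (h β) ^ n := by
    intro j
    exact rearrange (M ^ j) (hM.pow j) (fun β => (h β) ^ n)
  calc ∑ β ∈ Finset.univ.erase (0 : Fin d → ZMod 2), ∏ j ∈ Finset.range n, h ((M ^ j) *ᵥ β)
      ≤ ∑ β ∈ Finset.univ.erase (0 : Fin d → ZMod 2),
        (1 / (n : ℝ)) * ∑ j ∈ Finset.range n, (h ((M ^ j) *ᵥ β)) ^ n := step1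
    _ = (1 / n) * ∑ j ∈ Finset.range n, ∑ β ∈ Finset.univ.erase (0 : Fin d → ZMod 2),
        (h ((M ^ j) *ᵥ β)) ^ n := step2
    _ = (1 / n) * ∑ _j ∈ Finset.range n,
        ∑ β ∈ Finset.univ.erase (0 : Fin d → ZMod 2), (h β) ^ n := by
        rw [Finset.sum_congr rfl (fun j _ => step3 j)]
    _ = ∑ β ∈ Finset.univ.erase (0 : Fin d → ZMod 2), (h β) ^ n := by
        rw [Finset.sum_const, Finset.card_range, nsmul_eq_mul]
        field_simp

theorem perm_mixes_no_slower (d : ℕ) (hd : 0 < d)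
    (A : Matrix (Fin d) (Fin d) (ZMod 2)) (hA : IsUnit A) (n : ℕ) :
    2 ^ d * ∑ α, (chainDist d A (stepQ d) n α - 1 / 2 ^ d) ^ 2 ≤
      2 ^ d * ∑ α, (chainDist d (1 : Matrix (Fin d) (Fin d) (ZMod 2)) (stepQ d) n α
        - 1 / 2 ^ d) ^ 2 := by
  rcases Nat.eq_zero_or_pos n with rfl | hn
  · exact le_of_eq rfl
  have hMT : IsUnit Aᵀ := by
    rw [Matrix.isUnit_iff_isUnit_det, Matrix.det_transpose, ← Matrix.isUnit_iff_isUnit_det]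
    exact hA
  have hkey := key_ineq hn Aᵀ hMT (fun β => (ft d (stepQ d) β) ^ 2)
    (fun β => sq_nonneg _)
  have hLHS : ∀ β : Fin d → ZMod 2,
      (∏ j ∈ Finset.range n, ft d (stepQ d) ((Aᵀ ^ j) *ᵥ β)) ^ 2 =
        ∏ j ∈ Finset.range n, (ft d (stepQ d) ((Aᵀ ^ j) *ᵥ β)) ^ 2 := by
    intro β
    rw [Finset.prod_pow]
  have hRHS : ∀ β : Fin d → ZMod 2,
      (∏ j ∈ Finset.range n, ft d (stepQ d) (((1 : Matrix (Fin d) (Fin d) (ZMod 2))ᵀ ^ j) *ᵥ β)) ^ 2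
        = ((ft d (stepQ d) β) ^ 2) ^ n := by
    intro β
    have : ∀ j : ℕ, ((1 : Matrix (Fin d) (Fin d) (ZMod 2))ᵀ ^ j) *ᵥ β = β := by
      intro j
      rw [Matrix.transpose_one, one_pow, one_mulVec]
    rw [Finset.prod_congr rfl (fun j _ => by rw [this j]), Finset.prod_const, Finset.card_range,
      ← pow_mul, ← pow_mul, Nat.mul_comm]
  rw [dist_eq hd A n, dist_eq hd (1 : Matrix (Fin d) (Fin d) (ZMod 2)) n]
  rw [Finset.sum_congr rfl (fun β _ => hLHS β), Finset.sum_congr rfl (fun β _ => hRHS β)]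
  apply mul_le_mul_of_nonneg_left _ (by positivity : (0:ℝ) ≤ 2 ^ d)
  apply mul_le_mul_of_nonneg_left _ (by positivity : (0:ℝ) ≤ 1 / 2 ^ d)
  exact hkey
end

section
/- Let p be prime with 1+x+⋯+x^{p−1} irreducible over F_2, let d = p−1, and represent F_{2^d} = F_2[x]/(1+x+⋯+x^{d}). Then for 1 ≤ j ≤ d−1, the matrix A^j of the map y ↦ y^{2^j} with respect to the basis 1, x, ..., x^{d−1} is a permutation matrix in which the column with index j* ≡ (p−1)/2^j (mod p) (indices starting at 0) is replaced by the all-ones column. -/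
open Polynomial Finset

theorem squaring_matrix_structure (p : ℕ) (hp : p.Prime)
    (f : (ZMod 2)[X]) (hf : f = ∑ i ∈ Finset.range p, X ^ i)
    (hirr : Irreducible f)
    (j : ℕ) (hj1 : 1 ≤ j) (hj2 : j ≤ p - 2)
    (M : Matrix (Fin (p - 1)) (Fin (p - 1)) (ZMod 2))
    -- `M` is the matrix of `y ↦ y^(2^j)` in the basis `1, x, ..., x^(d-1)`:
    -- the `k`-th column gives the coordinates of `(x^k)^(2^j)`.
    (hM : ∀ k : Fin (p - 1),
      ((AdjoinRoot.root f) ^ (k : ℕ)) ^ (2 ^ j) =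
        ∑ i : Fin (p - 1), M i k • (AdjoinRoot.root f) ^ (i : ℕ)) :
    ∀ i k : Fin (p - 1),
      M i k =
        if (2 ^ j * (k : ℕ)) % p = p - 1 then 1
        else if (2 ^ j * (k : ℕ)) % p = (i : ℕ) then 1 else 0 := by
  have hf0 : f ≠ 0 := hirr.ne_zero
  have hp2 : 2 ≤ p := hp.two_le
  have hp0 : p ≠ 0 := hp.ne_zero
  set α := AdjoinRoot.root f with hα
  -- f is monic
  have hfm : f.Monic := by rw [hf]; exact monic_geom_sum_X hp0
  -- natDegree f = p - 1
  have hdeg : f.natDegree = p - 1 := by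
    have h1 : f * (X - 1) = X ^ p - 1 := by rw [hf]; exact geom_sum_mul X p
    have hm2 : (X - 1 : (ZMod 2)[X]).Monic := by
      simpa using monic_X_sub_C (1 : ZMod 2)
    have h2 : (f * (X - 1)).natDegree = p := by
      rw [h1]
      have h3 : (X ^ p - 1 : (ZMod 2)[X]) = X ^ p - C 1 := by simp
      rw [h3, natDegree_X_pow_sub_C]
    rw [hfm.natDegree_mul hm2] at h2
    have h4 : (X - 1 : (ZMod 2)[X]).natDegree = 1 := by
      simpa using natDegree_X_sub_C (1 : ZMod 2)
    rw [h4] at h2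
    omega
  -- aeval root f = 0
  have hsum0 : ∑ i ∈ Finset.range p, α ^ i = 0 := by
    have h : eval₂ (AdjoinRoot.of f) α (∑ i ∈ Finset.range p, X ^ i) = 0 := by
      rw [← hf]; exact AdjoinRoot.eval₂_root f
    simpa [eval₂_finset_sum] using h
  have hαp : α ^ p = 1 := by
    have h1 : (α - 1) * ∑ i ∈ Finset.range p, α ^ i = α ^ p - 1 := by
      rw [mul_comm]; exact geom_sum_mul α p
    rw [hsum0, mul_zero] at h1
    linear_combination -h1
  -- α^(p-1) = sum of smaller powers
  have hαtop : α ^ (p - 1) = ∑ i ∈ Finset.range (p - 1), α ^ i := by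
    have h1 : ∑ i ∈ Finset.range (p - 1) , α ^ i + α ^ (p-1) = 0 := by
      rw [← Finset.sum_range_succ]
      have : p - 1 + 1 = p := by omega
      rw [this]; exact hsum0
    have h2 : (2 : AdjoinRoot f) = 0 := by
      rw [← map_ofNat (algebraMap (ZMod 2) (AdjoinRoot f)) 2,
        show (2 : ZMod 2) = 0 by decide, map_zero]
    linear_combination h1 - (∑ i ∈ Finset.range (p - 1), α ^ i) * h2
  -- linear independence of powers
  have hli : LinearIndependent (ZMod 2) (fun i : Fin (p - 1) => α ^ (i : ℕ)) := by
    have h0 := (AdjoinRoot.powerBasis hf0).basis.linearIndependent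
    rw [PowerBasis.coe_basis] at h0
    have h := h0.comp (finCongr hdeg.symm : Fin (p-1) ≃ Fin ((AdjoinRoot.powerBasis hf0).dim))
      (finCongr hdeg.symm).injective
    exact h
  intro i k
  set r := (2 ^ j * (k : ℕ)) % p with hr
  have hrp : r < p := Nat.mod_lt _ (by omega)
  have hpow : (α ^ (k : ℕ)) ^ (2 ^ j) = α ^ r := by
    rw [← pow_mul, mul_comm, hr, pow_eq_pow_mod _ hαp]
  set N : Fin (p - 1) → ZMod 2 :=
    fun i => if r = p - 1 then 1 else if r = (i : ℕ) then 1 else 0 with hN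
  have hNsum : ∑ i : Fin (p - 1), N i • α ^ (i : ℕ) = α ^ r := by
    by_cases hcase : r = p - 1
    · have hone : ∀ x : Fin (p - 1), N x = 1 := fun x => if_pos hcase
      simp only [hone, one_smul]
      rw [Fin.sum_univ_eq_sum_range (fun i => α ^ i), ← hαtop, hcase]
    · have hrlt : r < p - 1 := by omega
      simp only [hN, if_neg hcase]
      rw [Finset.sum_congr rfl (fun i _ => ?_), Finset.sum_ite_eq' Finset.univ ⟨r, hrlt⟩
        (fun i : Fin (p-1) => α ^ (i : ℕ)), if_pos (Finset.mem_univ _)]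
      · rcases eq_or_ne i ⟨r, hrlt⟩ with h | h
        · subst h; simp
        · have hne : r ≠ (i : ℕ) := fun hc => h (Fin.ext hc.symm)
          simp [hne, h]
  have hdiff : ∑ i : Fin (p - 1), (M i k - N i) • α ^ (i : ℕ) = 0 := by
    simp only [sub_smul, Finset.sum_sub_distrib]
    rw [← hM k, hNsum, hpow, sub_self]
  have := Fintype.linearIndependent_iff.mp hli _ hdiff i
  have hMN : M i k = N i := by linear_combination this
  rw [hMN]
end
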